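/- Let N ≥ 2 and let ℓ : ℝ^N → ℝ be twice continuously differentiable, and suppose that for every θ ∈ ℝ^N the Hessian of ℓ satisfies ∇²ℓ(θ) = −Σ_{1 ≤ i < j ≤ N} π_{i,j}(θ)(1 − π_{i,j}(θ)) e_{i,j} e_{i,j}ᵀ for some scalars π_{i,j}(θ) ∈ [0, 1]. Define A* := (1/4) Σ_{1 ≤ i < j ≤ N} e_{i,j} e_{i,j}ᵀ. Then for every θ₀ ∈ ℝ^N, the quadratic function m(θ) := ℓ(θ₀) + (∇ℓ(θ₀))ᵀ(θ − θ₀) − (1/2)(θ − θ₀)ᵀ A* (θ − θ₀) is a minorizer of ℓ at θ₀: m(θ) ≤ ℓ(θ) for all θ ∈ ℝ^N, and m(θ₀) = ℓ(θ₀). -/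

import Mathlib

open Matrix

theorem quad_form_eq_sum (N : ℕ) (d : Fin N → ℝ) (e : Fin N → Fin N → Fin N → ℝ) :
    d ⬝ᵥ (((1 / 4 : ℝ) • ∑ i : Fin N, ∑ j ∈ Finset.Ioi i,
        Matrix.vecMulVec (e i j) (e i j)) *ᵥ d)
      = (1/4) * ∑ i : Fin N, ∑ j ∈ Finset.Ioi i, (d ⬝ᵥ e i j)^2 := by
  have hkey : ∀ a b : Fin N → ℝ, d ⬝ᵥ (Matrix.vecMulVec a b *ᵥ d) = (d ⬝ᵥ a) * (b ⬝ᵥ d) := by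
    intro a b
    have h1 : Matrix.vecMulVec a b *ᵥ d = (b ⬝ᵥ d) • a := by
      funext k
      simp [Matrix.mulVec, dotProduct, Matrix.vecMulVec_apply, Finset.mul_sum,
        Finset.sum_mul, mul_assoc, mul_comm, mul_left_comm]
    rw [h1, dotProduct_smul, smul_eq_mul, mul_comm]
  have hlin : ∀ {α : Type} (s : Finset α) (f : α → Matrix (Fin N) (Fin N) ℝ),
      d ⬝ᵥ ((∑ a ∈ s, f a) *ᵥ d) = ∑ a ∈ s, d ⬝ᵥ (f a *ᵥ d) := by
    intro α s f
    classical
    induction s using Finset.induction with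
    | empty => simp [Matrix.mulVec]
    | insert h ih => simp_all [Matrix.add_mulVec, dotProduct_add]
  rw [smul_mulVec, dotProduct_smul, smul_eq_mul, hlin]
  congr 1
  refine Finset.sum_congr rfl fun i _ => ?_
  rw [hlin]
  refine Finset.sum_congr rfl fun j _ => ?_
  rw [hkey, dotProduct_comm, sq]

theorem minorize_of_hessian_lower_bound (N : ℕ) (ℓ : (Fin N → ℝ) → ℝ) (hℓ : ContDiff ℝ 2 ℓ)
    (θ₀ d : Fin N → ℝ) (c : ℝ)
    (hc : ∀ t : ℝ, -c ≤ iteratedFDeriv ℝ 2 ℓ (θ₀ + t • d) ![d, d]) :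
    ℓ θ₀ + fderiv ℝ ℓ θ₀ d - (1/2) * c ≤ ℓ (θ₀ + d) := by
  set γ : ℝ → (Fin N → ℝ) := fun t => θ₀ + t • d with hγdef
  have hγ : ∀ t : ℝ, HasDerivAt γ d t := by
    intro t
    simpa [hγdef] using ((hasDerivAt_id t).smul_const d).const_add θ₀
  have hdiff : Differentiable ℝ ℓ := hℓ.differentiable two_ne_zero
  set g : ℝ → ℝ := fun t => fderiv ℝ ℓ (γ t) d with hgdef
  have hφ : ∀ t : ℝ, HasDerivAt (fun s => ℓ (γ s)) (g t) t := fun t =>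
    (hdiff (γ t)).hasFDerivAt.comp_hasDerivAt t (hγ t)
  have hF : ContDiff ℝ 1 (fderiv ℝ ℓ) := hℓ.fderiv_right (by norm_num)
  have hg : ∀ t : ℝ, HasDerivAt g (iteratedFDeriv ℝ 2 ℓ (γ t) ![d, d]) t := by
    intro t
    have h1 : HasDerivAt (fun s => fderiv ℝ ℓ (γ s)) (fderiv ℝ (fderiv ℝ ℓ) (γ t) d) t :=
      ((hF.differentiable one_ne_zero) (γ t)).hasFDerivAt.comp_hasDerivAt t (hγ t)
    have h2 := h1.clm_apply (hasDerivAt_const t d)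
    simp only [map_zero, add_zero] at h2
    have h3 : iteratedFDeriv ℝ 2 ℓ (γ t) ![d, d] = fderiv ℝ (fderiv ℝ ℓ) (γ t) d d := by
      rw [iteratedFDeriv_two_apply]
      simp
    rw [h3]
    exact h2
  set ψ' : ℝ → ℝ := fun t => g t + c * t with hψ'def
  have hψ : ∀ t : ℝ, HasDerivAt (fun s => ℓ (γ s) + c * s^2 / 2) (ψ' t) t := by
    intro t
    have : HasDerivAt (fun s : ℝ => c * s^2 / 2) (c * t) t := by
      have := ((hasDerivAt_pow 2 t).const_mul c).div_const 2
      convert this using 1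
      · rfl
      · rfl
      · simp
        ring
    exact (hφ t).add this
  have hψ'' : ∀ t : ℝ, HasDerivAt ψ' (iteratedFDeriv ℝ 2 ℓ (γ t) ![d, d] + c) t := by
    intro t
    have h := (hg t).add ((hasDerivAt_id t).const_mul c)
    rw [mul_one] at h
    exact h
  have hmono : Monotone ψ' :=
    monotone_of_hasDerivAt_nonneg hψ'' (fun t => by have := hc t; dsimp; linarith)
  obtain ⟨ξ, hξ, hslope⟩ := exists_hasDerivAt_eq_slope (fun s => ℓ (γ s) + c * s^2 / 2) ψ'
    one_pos (fun t _ => (hψ t).continuousAt.continuousWithinAt) (fun t _ => hψ t)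
  have h01 : ψ' 0 ≤ ψ' ξ := hmono hξ.1.le
  have hγ0 : γ 0 = θ₀ := by simp [hγdef]
  have hγ1 : γ 1 = θ₀ + d := by simp [hγdef]
  rw [hγ0, hγ1] at hslope
  have hg0 : ψ' 0 = fderiv ℝ ℓ θ₀ d := by simp [hψ'def, hgdef, hγ0]
  rw [hg0] at h01
  rw [hslope] at h01
  norm_num at h01
  linarith

/-- the quadratic function built from the constant curvature matrix
A* = (1/4)∑_{i<j} e_{i,j}e_{i,j}ᵀ minorizes ℓ at θ₀ whenever the Hessian of ℓ equals
-∑_{i<j} π_{i,j}(1-π_{i,j}) e_{i,j}e_{i,j}ᵀ with π_{i,j} ∈ [0,1]. -/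
theorem stmt_6 (N : ℕ) (hN : 2 ≤ N)
    (ℓ : (Fin N → ℝ) → ℝ) (hℓ : ContDiff ℝ 2 ℓ)
    (π : (Fin N → ℝ) → Fin N → Fin N → ℝ)
    (hπ : ∀ θ i j, 0 ≤ π θ i j ∧ π θ i j ≤ 1)
    (hHess : ∀ θ u v : Fin N → ℝ,
      iteratedFDeriv ℝ 2 ℓ θ ![u, v]
        = -(∑ i : Fin N, ∑ j ∈ Finset.Ioi i,
            π θ i j * (1 - π θ i j)
              * ((u ⬝ᵥ (fun k => if k = i ∨ k = j then (1 : ℝ) else 0))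
                * (v ⬝ᵥ (fun k => if k = i ∨ k = j then (1 : ℝ) else 0)))))
    (θ₀ : Fin N → ℝ) :
    (∀ θ : Fin N → ℝ,
      ℓ θ₀ + fderiv ℝ ℓ θ₀ (θ - θ₀)
        - (1 / 2) * ((θ - θ₀) ⬝ᵥ
            (((1 / 4 : ℝ) • ∑ i : Fin N, ∑ j ∈ Finset.Ioi i,
              Matrix.vecMulVec (fun k => if k = i ∨ k = j then (1 : ℝ) else 0)
                (fun k => if k = i ∨ k = j then (1 : ℝ) else 0)) *ᵥ (θ - θ₀)))
        ≤ ℓ θ)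
    ∧ (ℓ θ₀ + fderiv ℝ ℓ θ₀ (θ₀ - θ₀)
        - (1 / 2) * ((θ₀ - θ₀) ⬝ᵥ
            (((1 / 4 : ℝ) • ∑ i : Fin N, ∑ j ∈ Finset.Ioi i,
              Matrix.vecMulVec (fun k => if k = i ∨ k = j then (1 : ℝ) else 0)
                (fun k => if k = i ∨ k = j then (1 : ℝ) else 0)) *ᵥ (θ₀ - θ₀)))
        = ℓ θ₀) := by
  constructor
  · intro θ
    set d : Fin N → ℝ := θ - θ₀ with hd
    set e : Fin N → Fin N → Fin N → ℝ :=
      fun i j => fun k => if k = i ∨ k = j then (1 : ℝ) else 0 with he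
    set c : ℝ := d ⬝ᵥ (((1 / 4 : ℝ) • ∑ i : Fin N, ∑ j ∈ Finset.Ioi i,
        Matrix.vecMulVec (e i j) (e i j)) *ᵥ d) with hcdef
    have hcval : c = (1/4) * ∑ i : Fin N, ∑ j ∈ Finset.Ioi i, (d ⬝ᵥ e i j)^2 :=
      quad_form_eq_sum N d e
    have hc : ∀ t : ℝ, -c ≤ iteratedFDeriv ℝ 2 ℓ (θ₀ + t • d) ![d, d] := by
      intro t
      rw [hHess (θ₀ + t • d) d d, hcval, neg_le_neg_iff, Finset.mul_sum]
      refine Finset.sum_le_sum fun i _ => ?_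
      rw [Finset.mul_sum]
      refine Finset.sum_le_sum fun j _ => ?_
      obtain ⟨h0, h1⟩ := hπ (θ₀ + t • d) i j
      set p := π (θ₀ + t • d) i j
      set x := d ⬝ᵥ e i j
      nlinarith [sq_nonneg (p - 1/2), sq_nonneg x]
    have := minorize_of_hessian_lower_bound N ℓ hℓ θ₀ d c hc
    have hθ : θ₀ + d = θ := by rw [hd]; abel
    rw [hθ] at this
    exact this
  · simp
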